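/- arXiv:2012.14166 — 2 statements merged into one kernel-verified Lean document; each statement's English description precedes it below -/
import Mathlib

section
/- The 2-closure of the imprimitive wreath product of two permutation groups equals the imprimitive wreath product of their 2-closures: for K ≤ Sym(Γ), L ≤ Sym(Δ), and any m ≥ 2, (K wr L)^(m) = K^(m) wr L^(m), where K wr L acts imprimitively on Γ × Δ. -/
/-- Two subgroups of `Perm Ω` have the same orbits on `Ω^m` under the
componentwise action (`m`-equivalence). -/
def SameOrbits {Ω : Type*} (m : ℕ) (G H : Subgroup (Equiv.Perm Ω)) : Prop :=
  ∀ α β : Fin m → Ω,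
    (∃ g ∈ G, ∀ i, g (α i) = β i) ↔ (∃ h ∈ H, ∀ i, h (α i) = β i)

/-- The `m`-closure of `G`: the largest subgroup of `Perm Ω` having the same
orbits as `G` on `Ω^m`. -/
def mClosure {Ω : Type*} (m : ℕ) (G : Subgroup (Equiv.Perm Ω)) :
    Subgroup (Equiv.Perm Ω) :=
  sSup {H | SameOrbits m G H}

/-- The pointwise closure: all permutations that agree with some element of `G`
on every `m`-tuple. -/
def ptClosure {Ω : Type*} (m : ℕ) (G : Subgroup (Equiv.Perm Ω)) :
    Subgroup (Equiv.Perm Ω) where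
  carrier := {f | ∀ α : Fin m → Ω, ∃ g ∈ G, ∀ i, g (α i) = f (α i)}
  one_mem' := fun α => ⟨1, G.one_mem, fun _ => rfl⟩
  mul_mem' := by
    intro f g hf hg α
    obtain ⟨b, hbG, hb⟩ := hg α
    obtain ⟨a, haG, ha⟩ := hf (fun i => g (α i))
    refine ⟨a * b, G.mul_mem haG hbG, fun i => ?_⟩
    rw [Equiv.Perm.mul_apply, Equiv.Perm.mul_apply, hb i]
    exact ha i
  inv_mem' := by
    intro f hf α
    obtain ⟨g, hgG, hg⟩ := hf (fun i => f⁻¹ (α i))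
    refine ⟨g⁻¹, G.inv_mem hgG, fun i => ?_⟩
    have h2 : g (f⁻¹ (α i)) = α i := by
      rw [hg i, Equiv.Perm.coe_inv, Equiv.apply_symm_apply]
    conv_lhs => rw [← h2]
    rw [Equiv.Perm.coe_inv, Equiv.symm_apply_apply]

theorem mem_ptClosure {Ω : Type*} {m : ℕ} {G : Subgroup (Equiv.Perm Ω)}
    {f : Equiv.Perm Ω} :
    f ∈ ptClosure m G ↔ ∀ α : Fin m → Ω, ∃ g ∈ G, ∀ i, g (α i) = f (α i) :=
  Iff.rfl

theorem mClosure_eq_ptClosure {Ω : Type*} (m : ℕ) (G : Subgroup (Equiv.Perm Ω)) :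
    mClosure m G = ptClosure m G := by
  apply le_antisymm
  · apply sSup_le
    intro H hH h hh α
    exact (hH α (fun i => h (α i))).mpr ⟨h, hh, fun _ => rfl⟩
  · apply le_sSup
    intro α β
    constructor
    · rintro ⟨g, hg, hgα⟩
      exact ⟨g, fun _ => ⟨g, hg, fun _ => rfl⟩, hgα⟩
    · rintro ⟨h, hh, hhα⟩
      obtain ⟨g, hg, h2⟩ := hh α
      exact ⟨g, hg, fun i => by rw [h2 i, hhα i]⟩

/-- The imprimitive wreath-type permutation `(γ, δ) ↦ (k δ γ, l δ)`. -/
def wrPerm {Γ Δ : Type*} (k : Δ → Equiv.Perm Γ) (l : Equiv.Perm Δ) :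
    Equiv.Perm (Γ × Δ) :=
  (Equiv.prodComm Γ Δ).trans ((Equiv.prodShear l k).trans (Equiv.prodComm Δ Γ))

theorem wrPerm_apply {Γ Δ : Type*} (k : Δ → Equiv.Perm Γ) (l : Equiv.Perm Δ)
    (γ : Γ) (δ : Δ) : wrPerm k l (γ, δ) = (k δ γ, l δ) := rfl

/-- For `m ≥ 2`, the `m`-closure of the imprimitive wreath product equals the
imprimitive wreath product of the `m`-closures: `(K wr L)^(m) = K^(m) wr L^(m)`.
Here `W` is `K wr L` and `W'` is `K^(m) wr L^(m)`, both acting imprimitively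
on `Γ × Δ` via `(γ, δ) ↦ (k δ γ, l δ)`. -/
theorem stmt16 {Γ Δ : Type*} [Fintype Γ] [Fintype Δ] (m : ℕ) (hm : 2 ≤ m)
    (K : Subgroup (Equiv.Perm Γ)) (L : Subgroup (Equiv.Perm Δ))
    (W W' : Subgroup (Equiv.Perm (Γ × Δ)))
    (hW : ∀ f : Equiv.Perm (Γ × Δ), f ∈ W ↔
      ∃ (k : Δ → Equiv.Perm Γ) (l : Equiv.Perm Δ),
        (∀ δ, k δ ∈ K) ∧ l ∈ L ∧
          ∀ (γ : Γ) (δ : Δ), f (γ, δ) = (k δ γ, l δ))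
    (hW' : ∀ f : Equiv.Perm (Γ × Δ), f ∈ W' ↔
      ∃ (k : Δ → Equiv.Perm Γ) (l : Equiv.Perm Δ),
        (∀ δ, k δ ∈ mClosure m K) ∧ l ∈ mClosure m L ∧
          ∀ (γ : Γ) (δ : Δ), f (γ, δ) = (k δ γ, l δ)) :
    mClosure m W = W' := by
  classical
  by_cases hE : IsEmpty (Γ × Δ)
  · -- degenerate case: the whole permutation group is trivial
    have hsub : Subsingleton (Equiv.Perm (Γ × Δ)) :=
      ⟨fun a b => Equiv.ext fun x => (hE.elim x)⟩
    ext f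
    have h1 : f = 1 := Subsingleton.elim f 1
    subst h1
    simp only [Subgroup.one_mem]
  · rw [not_isEmpty_iff] at hE
    obtain ⟨γ₀, δ₀⟩ := hE.some
    rw [mClosure_eq_ptClosure]
    apply le_antisymm
    · -- ptClosure m W ≤ W'
      intro f hf
      -- key two-point fact
      have key : ∀ x y : Γ × Δ, ∃ (k : Δ → Equiv.Perm Γ) (l : Equiv.Perm Δ),
          (∀ δ, k δ ∈ K) ∧ l ∈ L ∧
            f x = (k x.2 x.1, l x.2) ∧ f y = (k y.2 y.1, l y.2) := by
        intro x y
        obtain ⟨w, hwW, hw⟩ := hf (fun i : Fin m => if (i : ℕ) = 0 then x else y)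
        obtain ⟨k, l, hkK, hlL, hwkl⟩ := (hW w).mp hwW
        have h0 : w x = f x := by simpa using hw ⟨0, by omega⟩
        have h1 : w y = f y := by simpa using hw ⟨1, by omega⟩
        refine ⟨k, l, hkK, hlL, ?_, ?_⟩
        · rw [← h0]; exact hwkl x.1 x.2
        · rw [← h1]; exact hwkl y.1 y.2
      -- second coordinate depends only on δ
      have sec : ∀ (γ γ' : Γ) (δ : Δ), (f (γ, δ)).2 = (f (γ', δ)).2 := by
        intro γ γ' δ
        obtain ⟨k, l, _, _, h1, h2⟩ := key (γ, δ) (γ', δ)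
        rw [h1, h2]
      -- the induced map on Δ is injective
      have injΔ : Function.Injective (fun δ => (f (γ₀, δ)).2) := by
        intro δ δ' h
        obtain ⟨k, l, _, _, h1, h2⟩ := key (γ₀, δ) (γ₀, δ')
        simp only [h1, h2] at h
        exact l.injective h
      have injΓ : ∀ δ, Function.Injective (fun γ => (f (γ, δ)).1) := by
        intro δ γ γ' h
        obtain ⟨k, l, _, _, h1, h2⟩ := key (γ, δ) (γ', δ)
        simp only [h1, h2] at h
        exact (k δ).injective h
      set lhat : Equiv.Perm Δ :=
        Equiv.ofBijective _ (Finite.injective_iff_bijective.mp injΔ) with hlhat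
      set khat : Δ → Equiv.Perm Γ := fun δ =>
        Equiv.ofBijective _ (Finite.injective_iff_bijective.mp (injΓ δ)) with hkhat
      have hlhat_apply : ∀ δ, lhat δ = (f (γ₀, δ)).2 := fun δ => rfl
      have hkhat_apply : ∀ δ γ, khat δ γ = (f (γ, δ)).1 := fun δ γ => rfl
      rw [hW' f]
      refine ⟨khat, lhat, ?_, ?_, ?_⟩
      · intro δ
        rw [mClosure_eq_ptClosure, mem_ptClosure]
        intro β
        obtain ⟨w, hwW, hw⟩ := hf (fun i => (β i, δ))
        obtain ⟨k, l, hkK, hlL, hwkl⟩ := (hW w).mp hwW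
        refine ⟨k δ, hkK δ, fun i => ?_⟩
        have h1 : w (β i, δ) = f (β i, δ) := hw i
        rw [hwkl (β i) δ] at h1
        rw [hkhat_apply δ (β i), ← h1]
      · rw [mClosure_eq_ptClosure, mem_ptClosure]
        intro β
        obtain ⟨w, hwW, hw⟩ := hf (fun i => (γ₀, β i))
        obtain ⟨k, l, hkK, hlL, hwkl⟩ := (hW w).mp hwW
        refine ⟨l, hlL, fun i => ?_⟩
        have h1 : w (γ₀, β i) = f (γ₀, β i) := hw i
        rw [hwkl γ₀ (β i)] at h1
        rw [hlhat_apply (β i), ← h1]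
      · intro γ δ
        refine Prod.ext ?_ ?_
        · rw [hkhat_apply δ γ]
        · rw [hlhat_apply δ]; exact sec γ γ₀ δ
    · -- W' ≤ ptClosure m W
      intro f hf
      obtain ⟨k, l, hk, hl, hfkl⟩ := (hW' f).mp hf
      rw [mem_ptClosure]
      intro α
      rw [mClosure_eq_ptClosure, mem_ptClosure] at hl
      obtain ⟨l', hl'L, hl'⟩ := hl (fun i => (α i).2)
      have hk' : ∀ δ : Δ, ∃ g ∈ K, ∀ i, (α i).2 = δ → g (α i).1 = k δ (α i).1 := by
        intro δ
        by_cases h : ∃ i₀, (α i₀).2 = δ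
        · obtain ⟨i₀, hi₀⟩ := h
          have hkδ := hk δ
          rw [mClosure_eq_ptClosure, mem_ptClosure] at hkδ
          obtain ⟨g, hgK, hg⟩ :=
            hkδ (fun i => if (α i).2 = δ then (α i).1 else (α i₀).1)
          refine ⟨g, hgK, fun i hi => ?_⟩
          have := hg i
          simp only [if_pos hi] at this
          exact this
        · exact ⟨1, K.one_mem, fun i hi => absurd ⟨i, hi⟩ h⟩
      choose k' hk'K hk'agree using hk'
      refine ⟨wrPerm k' l', (hW _).mpr ⟨k', l', hk'K, hl'L, fun γ δ => rfl⟩,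
        fun i => ?_⟩
      have hx : α i = ((α i).1, (α i).2) := rfl
      rw [hx, wrPerm_apply, hfkl (α i).1 (α i).2,
        hk'agree (α i).2 i rfl, hl' i]
end

section
/- Suppose every solvable permutation group of degree less than n has solvable 3-closure. Then every intransitive solvable permutation group G of degree n has solvable 3-closure. -/
section Aux

open Equiv

variable {Ω : Type*}

theorem sameOrbits_refl (m : ℕ) (G : Subgroup (Perm Ω)) : SameOrbits m G G :=
  fun _ _ => Iff.rfl

theorem le_mClosure (m : ℕ) (G : Subgroup (Perm Ω)) : G ≤ mClosure m G :=
  le_sSup (sameOrbits_refl m G)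

/-- Every element of the `m`-closure moves each `m`-tuple to a `G`-equivalent one. -/
theorem mClosure_moves (m : ℕ) (G : Subgroup (Perm Ω)) {h : Perm Ω}
    (hh : h ∈ mClosure m G) (α : Fin m → Ω) :
    ∃ g ∈ G, ∀ i, g (α i) = h (α i) := by
  set C : Subgroup (Perm Ω) :=
    { carrier := {h | ∀ α : Fin m → Ω, ∃ g ∈ G, ∀ i, g (α i) = h (α i)}
      one_mem' := fun α => ⟨1, one_mem G, fun _ => rfl⟩
      mul_mem' := by
        rintro a b ha hb α
        obtain ⟨g2, hg2, h2⟩ := hb α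
        obtain ⟨g1, hg1, h1⟩ := ha (fun i => b (α i))
        refine ⟨g1 * g2, mul_mem hg1 hg2, fun i => ?_⟩
        simp only [Equiv.Perm.mul_apply]
        rw [h2 i]; exact h1 i
      inv_mem' := by
        rintro a ha α
        obtain ⟨g, hg, h1⟩ := ha (fun i => a⁻¹ (α i))
        refine ⟨g⁻¹, inv_mem hg, fun i => ?_⟩
        have := h1 i
        simp only [show ∀ x, a (a⁻¹ x) = x from fun x => Equiv.apply_symm_apply a x] at this
        have := congrArg (g⁻¹ : Perm Ω) this
        simpa using this.symm } with hC
  have hle : mClosure m G ≤ C := by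
    apply sSup_le
    intro H hH h hh α
    exact (hH α (fun i => h (α i))).mpr ⟨h, hh, fun _ => rfl⟩
  exact hle hh α

theorem sameOrbits_mClosure (m : ℕ) (G : Subgroup (Perm Ω)) :
    SameOrbits m G (mClosure m G) := by
  intro α β
  constructor
  · rintro ⟨g, hg, hge⟩; exact ⟨g, le_mClosure m G hg, hge⟩
  · rintro ⟨h, hh, he⟩
    obtain ⟨g, hg, hge⟩ := mClosure_moves m G hh α
    exact ⟨g, hg, fun i => (hge i).trans (he i)⟩

/-- `permCongr` as a `MulEquiv`. -/
def permCongrMulEquiv {α β : Type*} (e : α ≃ β) : Perm α ≃* Perm β :=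
  { e.permCongr with
    map_mul' := fun f g => by
      ext x
      simp [Equiv.permCongr_apply] }

theorem permCongrMulEquiv_apply {α β : Type*} (e : α ≃ β) (g : Perm α) (x : β) :
    permCongrMulEquiv e g x = e (g (e.symm x)) := rfl

theorem map_map_permCongr {α β : Type*} (e : α ≃ β) (K : Subgroup (Perm α)) :
    Subgroup.map (permCongrMulEquiv e.symm).toMonoidHom
      (Subgroup.map (permCongrMulEquiv e).toMonoidHom K) = K := by
  rw [Subgroup.map_map]
  have : (permCongrMulEquiv e.symm).toMonoidHom.comp (permCongrMulEquiv e).toMonoidHom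
      = MonoidHom.id (Perm α) := by
    apply MonoidHom.ext
    intro g
    apply Equiv.ext
    intro x
    simp [permCongrMulEquiv_apply]
  rw [this, Subgroup.map_id]

theorem sameOrbits_map {α β : Type*} (e : α ≃ β) {m : ℕ} {H K : Subgroup (Perm α)}
    (h : SameOrbits m H K) :
    SameOrbits m (H.map (permCongrMulEquiv e).toMonoidHom)
      (K.map (permCongrMulEquiv e).toMonoidHom) := by
  intro a b
  have conv : ∀ L : Subgroup (Perm α),
      (∃ g' ∈ L.map (permCongrMulEquiv e).toMonoidHom, ∀ i, g' (a i) = b i) ↔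
      (∃ g ∈ L, ∀ i, g (e.symm (a i)) = e.symm (b i)) := by
    intro L
    constructor
    · rintro ⟨g', ⟨g, hg, rfl⟩, hi⟩
      refine ⟨g, hg, fun i => ?_⟩
      have := congrArg e.symm (hi i)
      simpa [permCongrMulEquiv_apply] using this
    · rintro ⟨g, hg, hi⟩
      refine ⟨_, ⟨g, hg, rfl⟩, fun i => ?_⟩
      simp [permCongrMulEquiv_apply, hi i]
  rw [conv H, conv K]
  exact h _ _

theorem mClosure_map_le {α β : Type*} (e : α ≃ β) (m : ℕ) (H : Subgroup (Perm α)) :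
    (mClosure m H).map (permCongrMulEquiv e).toMonoidHom ≤
      mClosure m (H.map (permCongrMulEquiv e).toMonoidHom) :=
  le_sSup (sameOrbits_map e (sameOrbits_mClosure m H))

theorem mClosure_map {α β : Type*} (e : α ≃ β) (m : ℕ) (H : Subgroup (Perm α)) :
    mClosure m (H.map (permCongrMulEquiv e).toMonoidHom) =
      (mClosure m H).map (permCongrMulEquiv e).toMonoidHom := by
  refine le_antisymm ?_ (mClosure_map_le e m H)
  have key := mClosure_map_le e.symm m (H.map (permCongrMulEquiv e).toMonoidHom)
  rw [map_map_permCongr e H] at key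
  have hmono := Subgroup.map_mono (f := (permCongrMulEquiv e).toMonoidHom) key
  have h2 : Subgroup.map (permCongrMulEquiv e).toMonoidHom
      (Subgroup.map (permCongrMulEquiv e.symm).toMonoidHom
        (mClosure m (H.map (permCongrMulEquiv e).toMonoidHom)))
      = mClosure m (H.map (permCongrMulEquiv e).toMonoidHom) := by
    have := map_map_permCongr e.symm
      (mClosure m (H.map (permCongrMulEquiv e).toMonoidHom))
    simpa using this
  rwa [h2] at hmono

/-- Transfer solvability of an `m`-closure across an equivalence to `Fin k`. -/
theorem isSolvable_mClosure_of_small (n : ℕ)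
    (hsmall : ∀ k < n, ∀ G' : Subgroup (Equiv.Perm (Fin k)),
      IsSolvable G' → IsSolvable (mClosure 3 G'))
    {Γ : Type*} [Fintype Γ] (hk : Fintype.card Γ < n)
    (H : Subgroup (Perm Γ)) (hH : IsSolvable H) : IsSolvable (mClosure 3 H) := by
  classical
  let e : Γ ≃ Fin (Fintype.card Γ) := Fintype.equivFin Γ
  let φ := permCongrMulEquiv e
  let H' := H.map φ.toMonoidHom
  have hH' : IsSolvable H' := by
    haveI : Group.IsSolvable H := hH
    exact solvable_of_solvable_injective
      (f := (φ.subgroupMap H).symm.toMonoidHom) (φ.subgroupMap H).symm.injective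
  have hsolv' : IsSolvable (mClosure 3 H') := hsmall _ hk H' hH'
  have hmap : mClosure 3 H' =
      (mClosure 3 H).map (φ : Equiv.Perm Γ →* Equiv.Perm (Fin (Fintype.card Γ))) :=
    mClosure_map e 3 H
  haveI : Group.IsSolvable
      ((mClosure 3 H).map (φ : Equiv.Perm Γ →* Equiv.Perm (Fin (Fintype.card Γ)))) :=
    hmap ▸ hsolv'
  exact solvable_of_solvable_injective
    (f := (φ.subgroupMap (mClosure 3 H)).toMonoidHom)
    (φ.subgroupMap (mClosure 3 H)).injective

/-- Restriction of a subgroup of `Perm Ω` preserving a predicate `p`. -/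
def resHom (S : Subgroup (Perm Ω)) (p : Ω → Prop)
    (hS : ∀ h ∈ S, ∀ z, p z ↔ p (h z)) : S →* Perm {z // p z} where
  toFun h := Equiv.Perm.subtypePerm (h : Perm Ω) (fun z => (hS h h.2 z).symm)
  map_one' := by
    ext z
    simp [Equiv.Perm.subtypePerm_apply]
  map_mul' a b := by
    ext z
    simp [Equiv.Perm.subtypePerm_apply]; rfl

theorem resHom_apply (S : Subgroup (Perm Ω)) (p : Ω → Prop)
    (hS : ∀ h ∈ S, ∀ z, p z ↔ p (h z)) (h : S) (z : {z // p z}) :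
    (resHom S p hS h z : Ω) = (h : Perm Ω) z := rfl

end Aux

/-- If every solvable permutation group of degree less than `n` has solvable
3-closure, then every intransitive solvable permutation group of degree `n`
has solvable 3-closure. -/
theorem stmt17 (n : ℕ)
    (hsmall : ∀ k < n, ∀ G' : Subgroup (Equiv.Perm (Fin k)),
      IsSolvable G' → IsSolvable (mClosure 3 G'))
    {Ω : Type*} [Fintype Ω] (hΩ : Fintype.card Ω = n)
    (G : Subgroup (Equiv.Perm Ω)) (hsolv : IsSolvable G)
    (hintrans : ¬ ∀ x y : Ω, ∃ g ∈ G, g x = y) :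
    IsSolvable (mClosure 3 G) := by
  classical
  push_neg at hintrans
  obtain ⟨x, y, hxy⟩ := hintrans
  set M := mClosure 3 G with hM
  -- the orbit of `x`
  set p : Ω → Prop := fun z => ∃ g ∈ G, g x = z with hp
  have hx : p x := ⟨1, one_mem G, rfl⟩
  have hy : ¬ p y := by rintro ⟨g, hg, h⟩; exact hxy g hg h
  -- elements of M move points within G-orbits
  have hmove : ∀ h ∈ M, ∀ z : Ω, ∃ g ∈ G, g z = h z := by
    intro h hh z
    obtain ⟨g, hg, hge⟩ := mClosure_moves 3 G hh (fun _ => z)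
    exact ⟨g, hg, hge 0⟩
  have hfwd : ∀ h ∈ M, ∀ z, p z → p (h z) := by
    rintro h hh z ⟨g0, hg0, rfl⟩
    obtain ⟨g, hg, hge⟩ := hmove h hh (g0 x)
    exact ⟨g * g0, mul_mem hg hg0, hge⟩
  have hinvp : ∀ h ∈ M, ∀ z, p z ↔ p (h z) := by
    intro h hh z
    constructor
    · exact hfwd h hh z
    · intro hz
      have := hfwd h⁻¹ (inv_mem hh) (h z) hz
      simpa using this
  set q : Ω → Prop := fun z => ¬ p z with hq
  have hinvq : ∀ h ∈ M, ∀ z, q z ↔ q (h z) := by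
    intro h hh z
    exact not_congr (hinvp h hh z)
  have hinvpG : ∀ h ∈ G, ∀ z, p z ↔ p (h z) := fun h hh => hinvp h (le_mClosure 3 G hh)
  have hinvqG : ∀ h ∈ G, ∀ z, q z ↔ q (h z) := fun h hh => hinvq h (le_mClosure 3 G hh)
  -- restriction homomorphisms
  let ρGp : G →* Equiv.Perm {z // p z} := resHom G p hinvpG
  let ρGq : G →* Equiv.Perm {z // q z} := resHom G q hinvqG
  let ρMp : M →* Equiv.Perm {z // p z} := resHom M p hinvp
  let ρMq : M →* Equiv.Perm {z // q z} := resHom M q hinvq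
  -- the image of M has the same orbits as the image of G, on either part
  have key : ∀ (r : Ω → Prop) (hr : ∀ h ∈ G, ∀ z, r z ↔ r (h z))
      (hrM : ∀ h ∈ M, ∀ z, r z ↔ r (h z)),
      SameOrbits 3 (resHom G r hr).range (resHom M r hrM).range := by
    intro r hr hrM a b
    constructor
    · rintro ⟨g', ⟨g, rfl⟩, hi⟩
      refine ⟨resHom M r hrM ⟨(g : Equiv.Perm Ω), le_mClosure 3 G g.2⟩, ⟨_, rfl⟩, ?_⟩
      intro i
      have := hi i
      apply Subtype.ext
      rw [resHom_apply]
      rw [← this, resHom_apply]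
    · rintro ⟨h', ⟨h, rfl⟩, hi⟩
      obtain ⟨g, hg, hge⟩ := mClosure_moves 3 G h.2 (fun i => (a i : Ω))
      refine ⟨resHom G r hr ⟨g, hg⟩, ⟨_, rfl⟩, ?_⟩
      intro i
      apply Subtype.ext
      rw [resHom_apply]
      have hbi : ((h : Equiv.Perm Ω)) (a i : Ω) = (b i : Ω) := by
        rw [← resHom_apply M r hrM h (a i), hi i]
      rw [hge i, hbi]
  have hrangep : ρMp.range ≤ mClosure 3 ρGp.range := le_sSup (key p hinvpG hinvp)
  have hrangeq : ρMq.range ≤ mClosure 3 ρGq.range := le_sSup (key q hinvqG hinvq)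
  -- cardinalities
  have hcardp : Fintype.card {z // p z} < n := hΩ ▸ Fintype.card_subtype_lt (x := y) hy
  have hcardq : Fintype.card {z // q z} < n := by
    refine hΩ ▸ Fintype.card_subtype_lt (x := x) ?_
    simp only [hq, not_not]
    exact hx
  -- solvability of the images of G
  haveI : Group.IsSolvable G := hsolv
  have hGp : IsSolvable ρGp.range := solvable_of_surjective ρGp.rangeRestrict_surjective
  have hGq : IsSolvable ρGq.range := solvable_of_surjective ρGq.rangeRestrict_surjective
  -- solvability of the closures on the parts
  have hAp : IsSolvable (mClosure 3 ρGp.range) :=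
    isSolvable_mClosure_of_small n hsmall hcardp _ hGp
  have hAq : IsSolvable (mClosure 3 ρGq.range) :=
    isSolvable_mClosure_of_small n hsmall hcardq _ hGq
  -- the combined restriction map
  let Φ : M →* Equiv.Perm {z // p z} × Equiv.Perm {z // q z} := ρMp.prod ρMq
  have hΦinj : Function.Injective Φ := by
    intro h1 h2 heq
    apply Subtype.ext
    apply Equiv.ext
    intro z
    by_cases hz : p z
    · have h1' := congrArg Prod.fst heq
      have := congrArg (fun π => ((π ⟨z, hz⟩ : {z // p z}) : Ω)) h1'
      simpa [Φ, ρMp, resHom_apply] using this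
    · have h2' := congrArg Prod.snd heq
      have := congrArg (fun π => ((π ⟨z, hz⟩ : {z // q z}) : Ω)) h2'
      simpa [Φ, ρMq, resHom_apply] using this
  have hΦrange : ∀ h : M, Φ h ∈ (mClosure 3 ρGp.range).prod (mClosure 3 ρGq.range) := by
    intro h
    exact ⟨hrangep ⟨h, rfl⟩, hrangeq ⟨h, rfl⟩⟩
  let Ψ : M →* ((mClosure 3 ρGp.range).prod (mClosure 3 ρGq.range)) :=
    Φ.codRestrict _ hΦrange
  have hΨinj : Function.Injective Ψ := by
    intro h1 h2 heq
    apply hΦinj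
    exact congrArg Subtype.val heq
  haveI : Group.IsSolvable ((mClosure 3 ρGp.range) × (mClosure 3 ρGq.range)) := by
    haveI : Group.IsSolvable _ := hAp; haveI : Group.IsSolvable _ := hAq; infer_instance
  haveI : Group.IsSolvable ((mClosure 3 ρGp.range).prod (mClosure 3 ρGq.range)) :=
    solvable_of_solvable_injective
      (f := ((mClosure 3 ρGp.range).prodEquiv (mClosure 3 ρGq.range)).toMonoidHom)
      ((mClosure 3 ρGp.range).prodEquiv (mClosure 3 ρGq.range)).injective
  exact solvable_of_solvable_injective (f := Ψ) hΨinj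
end
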